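/- For any weighted-envy-freeable allocation A, the minimal envy-eliminating subsidy vector s*_i = w_i · ℓ_i(A) has at least one agent i with s*_i = 0. -/

import Mathlib

/-- Sum of edge costs along the consecutive pairs of a list (a directed path). -/
noncomputable def pathCost {n : ℕ} (c : Fin n → Fin n → ℝ) (p : List (Fin n)) : ℝ :=
  ((p.zip p.tail).map fun q => c q.1 q.2).sum

/-- Sum of edge costs along a cycle `i₁,…,i_r,i₁`. -/
noncomputable def cycleCost {n : ℕ} (c : Fin n → Fin n → ℝ) (p : List (Fin n)) : ℝ :=
  ((p.zip (p.rotate 1)).map fun q => c q.1 q.2).sum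

/-- Weighted envy edge cost without subsidies. -/
noncomputable def envyCost {n : ℕ} (v : Fin n → Fin n → ℝ) (w : Fin n → ℝ) (i j : Fin n) : ℝ :=
  v i j / w j - v i i / w i

/-- Weighted envy edge cost with subsidy vector `s`. -/
noncomputable def envyCostS {n : ℕ} (v : Fin n → Fin n → ℝ) (w : Fin n → ℝ) (s : Fin n → ℝ)
    (i j : Fin n) : ℝ :=
  (v i j + s j) / w j - (v i i + s i) / w i

/-- `(A,s)` is weighted-envy-free. -/
def IsWEF {n : ℕ} (v : Fin n → Fin n → ℝ) (w : Fin n → ℝ) (s : Fin n → ℝ) : Prop :=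
  ∀ i j, (v i j + s j) / w j ≤ (v i i + s i) / w i

/-- The set of costs of (vertex-distinct) directed paths starting at `i`. -/
noncomputable def pathCostsFrom {n : ℕ} (c : Fin n → Fin n → ℝ) (i : Fin n) : Set ℝ :=
  {x | ∃ p : List (Fin n), p ≠ [] ∧ p.Nodup ∧ p.head? = some i ∧ pathCost c p = x}

lemma pathCost_singleton {n : ℕ} (c : Fin n → Fin n → ℝ) (a : Fin n) :
    pathCost c [a] = 0 := by simp [pathCost]

lemma pathCost_cons_cons {n : ℕ} (c : Fin n → Fin n → ℝ) (a b : Fin n) (l : List (Fin n)) :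
    pathCost c (a :: b :: l) = c a b + pathCost c (b :: l) := by
  simp [pathCost]

lemma pathCost_append {n : ℕ} (c : Fin n → Fin n → ℝ) :
    ∀ (l : List (Fin n)) (x : Fin n) (m : List (Fin n)),
    pathCost c (l ++ x :: m) = pathCost c (l ++ [x]) + pathCost c (x :: m) := by
  intro l
  induction l with
  | nil => intro x m; simp [pathCost_singleton]
  | cons a l ih =>
    intro x m
    cases l with
    | nil => simp [pathCost_cons_cons, pathCost_singleton]
    | cons b l' =>
      have h1 : (a :: b :: l') ++ x :: m = a :: b :: (l' ++ x :: m) := by simp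
      have h2 : (a :: b :: l') ++ [x] = a :: b :: (l' ++ [x]) := by simp
      rw [h1, h2, pathCost_cons_cons, pathCost_cons_cons]
      have := ih x m
      simp only [List.cons_append] at this
      rw [this]
      ring

lemma zip_append_left {α : Type*} :
    ∀ (m l t : List α), m.length ≤ l.length → (l ++ t).zip m = l.zip m := by
  intro m
  induction m with
  | nil => intro l t _; simp
  | cons y m' ih =>
    intro l t h
    cases l with
    | nil => simp at h
    | cons a l' =>
      simp only [List.cons_append, List.zip_cons_cons]
      rw [ih l' t (by simpa using h)]

lemma cycleCost_eq_pathCost {n : ℕ} (c : Fin n → Fin n → ℝ) (x : Fin n) (b : List (Fin n)) :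
    cycleCost c (x :: b) = pathCost c ((x :: b) ++ [x]) := by
  have hrot : (x :: b).rotate 1 = b ++ [x] := by
    rw [List.rotate_cons_succ, List.rotate_zero]
  have htail : ((x :: b) ++ [x]).tail = b ++ [x] := by simp
  unfold cycleCost pathCost
  rw [hrot, htail]
  have : ((x :: b) ++ [x]).zip (b ++ [x]) = (x :: b).zip (b ++ [x]) :=
    zip_append_left _ _ _ (by simp)
  rw [this]


/-- For a WEF-able allocation (no positive-cost cycles), at least one agent
requires zero subsidy in the minimal subsidy vector `s* i = w i * ℓ i`. -/
theorem exists_agent_zero_subsidy {n : ℕ} (hn : 0 < n)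
    (w : Fin n → ℝ) (hw : ∀ i, 0 < w i)
    (v : Fin n → Fin n → ℝ) (hv : ∀ i j, 0 ≤ v i j)
    (hcyc : ∀ c : List (Fin n), c ≠ [] → cycleCost (envyCost v w) c ≤ 0)
    (ℓ : Fin n → ℝ) (hℓ : ∀ i, IsGreatest (pathCostsFrom (envyCost v w) i) (ℓ i)) :
    ∃ i, w i * ℓ i = 0 := by
  set c := envyCost v w with hc
  -- walk lemma
  have walk : ∀ N (p : List (Fin n)) (a : Fin n) (t : List (Fin n)), p = a :: t →
      p.length ≤ N → pathCost c p ≤ ℓ a := by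
    intro N
    induction N with
    | zero => intro p a t hp hlen; simp [hp] at hlen
    | succ N ih =>
      intro p a t hp hlen
      by_cases hnd : p.Nodup
      · exact (hℓ a).2 ⟨p, by simp [hp], hnd, by simp [hp], rfl⟩
      · obtain ⟨x, hx⟩ := List.exists_duplicate_iff_not_nodup.2 hnd
        rw [List.duplicate_iff_sublist, List.cons_sublist_iff] at hx
        obtain ⟨r₁, r₂, hpr, hxr₁, hxr₂⟩ := hx
        rw [List.singleton_sublist] at hxr₂
        obtain ⟨s, t₁, rfl⟩ := List.append_of_mem hxr₁
        obtain ⟨u, t₂, rfl⟩ := List.append_of_mem hxr₂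
        -- p = s ++ x :: (t₁ ++ u) ++ x :: t₂
        have hpe : p = s ++ x :: ((t₁ ++ u) ++ x :: t₂) := by
          rw [hpr]; simp
        have hcost : pathCost c p = pathCost c (s ++ [x]) +
            pathCost c (x :: ((t₁ ++ u) ++ x :: t₂)) := by
          rw [hpe, pathCost_append]
        have hcost2 : pathCost c (x :: ((t₁ ++ u) ++ x :: t₂)) =
            pathCost c ((x :: (t₁ ++ u)) ++ [x]) + pathCost c (x :: t₂) := by
          have : x :: ((t₁ ++ u) ++ x :: t₂) = (x :: (t₁ ++ u)) ++ x :: t₂ := by simp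
          rw [this, pathCost_append]
        have hcyc' : pathCost c ((x :: (t₁ ++ u)) ++ [x]) ≤ 0 := by
          rw [← cycleCost_eq_pathCost]
          exact hcyc _ (by simp)
        have hsplit : pathCost c (s ++ x :: t₂) = pathCost c (s ++ [x]) + pathCost c (x :: t₂) :=
          pathCost_append c s x t₂
        have hred : pathCost c p ≤ pathCost c (s ++ x :: t₂) := by linarith
        -- apply ih to the shorter list
        have hlen' : (s ++ x :: t₂).length ≤ N := by
          have : p.length = (s ++ x :: t₂).length + (t₁ ++ u).length + 1 := by
            rw [hpe]; simp; omega
          omega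
        have hhead : ∃ t', s ++ x :: t₂ = a :: t' := by
          cases s with
          | nil =>
            have : a = x := by
              have := hpe; rw [hp] at this; simp at this; exact this.1
            exact ⟨t₂, by simp [this]⟩
          | cons b s' =>
            have : a = b := by
              have := hpe; rw [hp] at this; simp at this; exact this.1
            exact ⟨s' ++ x :: t₂, by simp [this]⟩
        obtain ⟨t', ht'⟩ := hhead
        exact hred.trans (ih _ a t' ht' hlen')
  -- main argument
  obtain ⟨p, hpne, hpnd, hphead, hpcost⟩ := (hℓ ⟨0, hn⟩).1
  refine ⟨p.getLast hpne, ?_⟩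
  set j := p.getLast hpne with hj
  have hj0 : 0 ≤ ℓ j := (hℓ j).2 ⟨[j], by simp, by simp, by simp, pathCost_singleton _ _⟩
  have hjle : ℓ j ≤ 0 := by
    obtain ⟨q, hqne, hqnd, hqhead, hqcost⟩ := (hℓ j).1
    obtain ⟨j', q', rfl⟩ : ∃ j' q', q = j' :: q' := ⟨q.head hqne, q.tail, (List.cons_head_tail hqne).symm⟩
    have hjj : j' = j := by simpa using hqhead
    have hpdecomp : p = p.dropLast ++ [j'] := by
      rw [hjj, hj]; exact (List.dropLast_append_getLast hpne).symm
    have hr : pathCost c (p.dropLast ++ j' :: q') = pathCost c p + ℓ j := by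
      rw [pathCost_append, ← hpdecomp, hqcost]
    have hrhead : ∃ t', p.dropLast ++ j' :: q' = (⟨0, hn⟩ : Fin n) :: t' := by
      cases hdl : p.dropLast with
      | nil =>
        have : p = [j'] := by rw [hpdecomp, hdl]; simp
        have : j' = ⟨0, hn⟩ := by rw [this] at hphead; simpa using hphead
        exact ⟨q', by simp [hdl, this]⟩
      | cons b s' =>
        have hb : b = ⟨0, hn⟩ := by
          rw [hpdecomp, hdl] at hphead; simpa using hphead
        exact ⟨s' ++ j' :: q', by simp [hdl, hb]⟩
    obtain ⟨t', ht'⟩ := hrhead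
    have := walk (p.dropLast ++ j' :: q').length _ _ _ ht' le_rfl
    rw [hr, hpcost] at this
    linarith
  have : ℓ j = 0 := le_antisymm hjle hj0
  rw [this, mul_zero]
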